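/- Let A be a real n×m matrix, let 0 < p ≤ 1, let x* ∈ ℝ^m, and set t = ‖x*‖₀. If for every nonzero x ∈ Ker(A) and every index set S ⊆ {1,…,m} with |S| ≤ t one has ‖x_S‖_p^p < ‖x_{S^C}‖_p^p, then x* is the unique minimizer of ‖·‖_p^p over the affine set {x ∈ ℝ^m : Ax = Ax*}; that is, every y ∈ ℝ^m with Ay = Ax* and y ≠ x* satisfies ‖x*‖_p^p < ‖y‖_p^p. -/

import Mathlib

/-- The number of nonzero entries of a vector (the "l0-norm"). -/
noncomputable def l0norm {m : ℕ} (x : Fin m → ℝ) : ℕ :=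
  (Finset.univ.filter (fun i => x i ≠ 0)).card

lemma abs_rpow_add_le (a b : ℝ) {p : ℝ} (hp0 : 0 < p) (hp1 : p ≤ 1) :
    |a + b| ^ p ≤ |a| ^ p + |b| ^ p := by
  have h1 : |a + b| ^ p ≤ (|a| + |b|) ^ p :=
    Real.rpow_le_rpow (abs_nonneg _) (abs_add_le a b) hp0.le
  refine h1.trans ?_
  have := NNReal.rpow_add_le_add_rpow ⟨|a|, abs_nonneg a⟩ ⟨|b|, abs_nonneg b⟩ hp0.le hp1
  have h2 := NNReal.coe_le_coe.mpr this
  push_cast [NNReal.coe_rpow] at h2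
  exact h2

/-- Sufficiency of the null space property for `l_p`-minimization, `0 < p ≤ 1`.
If for every nonzero `x ∈ Ker A` and every index set `S` with `|S| ≤ ‖x*‖₀` we have
`‖x_S‖_p^p < ‖x_{Sᶜ}‖_p^p`, then `x*` is the unique minimizer of `‖·‖_p^p` over
`{x | A x = A x*}`. -/
theorem stmt0 (n m : ℕ) (A : Matrix (Fin n) (Fin m) ℝ) (p : ℝ) (hp0 : 0 < p) (hp1 : p ≤ 1)
    (xstar : Fin m → ℝ)
    (hNSP : ∀ x : Fin m → ℝ, x ≠ 0 → A.mulVec x = 0 →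
      ∀ S : Finset (Fin m), S.card ≤ l0norm xstar →
        ∑ i ∈ S, |x i| ^ p < ∑ i ∈ Sᶜ, |x i| ^ p) :
    ∀ y : Fin m → ℝ, A.mulVec y = A.mulVec xstar → y ≠ xstar →
      ∑ i, |xstar i| ^ p < ∑ i, |y i| ^ p := by
  intro y hAy hne
  set x : Fin m → ℝ := xstar - y with hx
  have hxne : x ≠ 0 := by
    intro h
    apply hne
    have := sub_eq_zero.mp h
    exact this.symm
  have hker : A.mulVec x = 0 := by
    rw [hx, Matrix.mulVec_sub, hAy, sub_self]
  set S : Finset (Fin m) := Finset.univ.filter (fun i => xstar i ≠ 0) with hS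
  have hcard : S.card ≤ l0norm xstar := le_rfl
  have hkey := hNSP x hxne hker S hcard
  -- off S, xstar i = 0 so |x i| = |y i|
  have hSc : ∀ i ∈ Sᶜ, |x i| ^ p = |y i| ^ p := by
    intro i hi
    have : xstar i = 0 := by
      simp only [hS, Finset.mem_compl, Finset.mem_filter, Finset.mem_univ, true_and,
        not_not] at hi
      exact hi
    simp [hx, this]
  have hzero : ∀ i ∈ Sᶜ, |xstar i| ^ p = 0 := by
    intro i hi
    have : xstar i = 0 := by
      simp only [hS, Finset.mem_compl, Finset.mem_filter, Finset.mem_univ, true_and,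
        not_not] at hi
      exact hi
    simp [this, Real.zero_rpow hp0.ne']
  -- on S, |xstar i|^p ≤ |y i|^p + |x i|^p
  have hOn : ∀ i ∈ S, |xstar i| ^ p ≤ |y i| ^ p + |x i| ^ p := by
    intro i _
    have : xstar i = y i + x i := by simp [hx]
    rw [this]
    exact abs_rpow_add_le (y i) (x i) hp0 hp1
  calc ∑ i, |xstar i| ^ p = ∑ i ∈ S, |xstar i| ^ p := by
        rw [← Finset.sum_compl_add_sum S]
        rw [Finset.sum_eq_zero hzero, zero_add]
    _ ≤ ∑ i ∈ S, (|y i| ^ p + |x i| ^ p) := Finset.sum_le_sum hOn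
    _ = ∑ i ∈ S, |y i| ^ p + ∑ i ∈ S, |x i| ^ p := Finset.sum_add_distrib
    _ < ∑ i ∈ S, |y i| ^ p + ∑ i ∈ Sᶜ, |x i| ^ p := by linarith
    _ = ∑ i ∈ S, |y i| ^ p + ∑ i ∈ Sᶜ, |y i| ^ p := by rw [Finset.sum_congr rfl hSc]
    _ = ∑ i, |y i| ^ p := by rw [add_comm, Finset.sum_compl_add_sum]
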